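/- arXiv:1806.07178 — 5 statements merged into one kernel-verified Lean document; each statement's English description precedes it below -/
import Mathlib

section
/- Let α₁, α₂ > 0 and μ₁₁, μ₂₂ ≥ 0. Define R₁(η) = log₂(1 + α₁η/(1+μ₁₁)) and R₂(η) = log₂(1 + α₂(1-η)/(1+μ₂₂)) for η ∈ [0,1]. Then R₁ is a strictly concave function of R₂ along the parametric curve; equivalently, the parametrically defined second derivative (R₁''R₂' − R₂''R₁')/(R₂')³ is strictly negative for all η ∈ (0,1). -/
open Real Set

lemma aux1 (d c x : ℝ) (h : 0 < d + c * x) :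
    HasDerivAt (fun x => Real.logb 2 (d + c * x)) (c / ((d + c * x) * Real.log 2)) x := by
  have h1 : HasDerivAt (fun x : ℝ => d + c * x) c x := by
    simpa using ((hasDerivAt_id x).const_mul c).const_add d
  have h2 : HasDerivAt (fun x : ℝ => Real.log (d + c * x)) (c / (d + c * x)) x := by
    have := (Real.hasDerivAt_log (ne_of_gt h)).comp x h1
    simpa [div_eq_inv_mul, Function.comp_def] using this
  have h3 := h2.div_const (Real.log 2)
  have heq : (fun x : ℝ => Real.logb 2 (d + c * x)) = fun x => Real.log (d + c * x) / Real.log 2 := by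
    funext y; rw [Real.logb]
  rw [heq]
  rw [div_div] at h3
  exact h3

lemma aux2 (d c x : ℝ) (h : 0 < d + c * x) :
    HasDerivAt (fun x => c / ((d + c * x) * Real.log 2))
      (-(c ^ 2) / ((d + c * x) ^ 2 * Real.log 2)) x := by
  have hL : Real.log 2 ≠ 0 := by
    have := Real.log_pos (by norm_num : (1:ℝ) < 2); linarith
  have h1 : HasDerivAt (fun x : ℝ => d + c * x) c x := by
    simpa using ((hasDerivAt_id x).const_mul c).const_add d
  have h2 : HasDerivAt (fun x : ℝ => (d + c * x)⁻¹) (-c / (d + c * x) ^ 2) x := by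
    simpa [neg_div, Pi.inv_def] using h1.inv (ne_of_gt h)
  have h3 := h2.const_mul (c / Real.log 2)
  have heq : (fun x : ℝ => c / ((d + c * x) * Real.log 2)) = fun x => c / Real.log 2 * (d + c * x)⁻¹ := by
    funext y
    field_simp
  rw [heq]
  refine h3.congr_deriv ?_
  have hAne : (d + c * x) ≠ 0 := ne_of_gt h
  rw [div_mul_div_comm]
  ring

lemma deriv_eq_on (d c : ℝ) (η : ℝ) (h : 0 < d + c * η) :
    deriv (deriv (fun x => Real.logb 2 (d + c * x))) η
      = -(c ^ 2) / ((d + c * η) ^ 2 * Real.log 2) ∧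
    deriv (fun x => Real.logb 2 (d + c * x)) η = c / ((d + c * η) * Real.log 2) := by
  have hopen : IsOpen {x : ℝ | 0 < d + c * x} := by
    have : Continuous fun x : ℝ => d + c * x := by continuity
    exact isOpen_lt continuous_const this
  have hmem : {x : ℝ | 0 < d + c * x} ∈ nhds η := hopen.mem_nhds h
  have heq : deriv (fun x => Real.logb 2 (d + c * x)) =ᶠ[nhds η]
      fun x => c / ((d + c * x) * Real.log 2) :=
    Filter.eventuallyEq_of_mem hmem fun x hx => (aux1 d c x hx).deriv
  constructor
  · rw [heq.deriv_eq]
    exact (aux2 d c η h).deriv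
  · exact (aux1 d c η h).deriv

theorem stmt_0 (α₁ α₂ μ₁₁ μ₂₂ : ℝ) (hα₁ : 0 < α₁) (hα₂ : 0 < α₂)
    (hμ₁₁ : 0 ≤ μ₁₁) (hμ₂₂ : 0 ≤ μ₂₂)
    (R₁ R₂ : ℝ → ℝ)
    (hR₁ : ∀ η, R₁ η = Real.logb 2 (1 + α₁ * η / (1 + μ₁₁)))
    (hR₂ : ∀ η, R₂ η = Real.logb 2 (1 + α₂ * (1 - η) / (1 + μ₂₂))) :
    ∀ η ∈ Ioo (0:ℝ) 1,
      (deriv (deriv R₁) η * deriv R₂ η - deriv (deriv R₂) η * deriv R₁ η)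
        / (deriv R₂ η) ^ 3 < 0 := by
  intro η hη
  obtain ⟨hη0, hη1⟩ := hη
  have hd₁ : (0:ℝ) < 1 + μ₁₁ := by linarith
  have hd₂ : (0:ℝ) < 1 + μ₂₂ := by linarith
  set a : ℝ := α₁ / (1 + μ₁₁) with ha
  set b : ℝ := α₂ / (1 + μ₂₂) with hb
  have ha0 : 0 < a := div_pos hα₁ hd₁
  have hb0 : 0 < b := div_pos hα₂ hd₂
  have hR₁' : R₁ = fun x => Real.logb 2 (1 + a * x) := by
    funext x; rw [hR₁ x]; congr 1; rw [ha]; field_simp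
  have hR₂' : R₂ = fun x => Real.logb 2 ((1 + b) + (-b) * x) := by
    funext x; rw [hR₂ x]; congr 1; rw [hb]; field_simp; ring
  have hA : 0 < 1 + a * η := by nlinarith
  have hB : 0 < (1 + b) + (-b) * η := by nlinarith
  have hL : 0 < Real.log 2 := Real.log_pos (by norm_num)
  obtain ⟨h1'', h1'⟩ := deriv_eq_on 1 a η hA
  obtain ⟨h2'', h2'⟩ := deriv_eq_on (1 + b) (-b) η hB
  rw [hR₁', hR₂', h1'', h1', h2'', h2']
  set A := 1 + a * η
  set B := (1 + b) + (-b) * η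
  set L := Real.log 2
  have hnum : (0:ℝ) <
      -(a ^ 2) / (A ^ 2 * L) * (-b / (B * L)) - -((-b) ^ 2) / (B ^ 2 * L) * (a / (A * L)) := by
    have heq : -(a ^ 2) / (A ^ 2 * L) * (-b / (B * L)) - -((-b) ^ 2) / (B ^ 2 * L) * (a / (A * L))
        = a ^ 2 * b / (A ^ 2 * B * L ^ 2) + a * b ^ 2 / (A * B ^ 2 * L ^ 2) := by
      field_simp
      ring
    rw [heq]
    positivity
  have hden : (-b / (B * L)) ^ 3 < 0 := by
    have : (-b / (B * L)) ^ 3 = -((b / (B * L)) ^ 3) := by ring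
    rw [this]
    have : 0 < (b / (B * L)) ^ 3 := by positivity
    linarith
  exact div_neg_of_pos_of_neg hnum hden
end

section
/- Let α₁, α₂ > 0 and μ₁₁, μ₁₂ ≥ 0 with μ₁₂ > 0. Define R₁(η₂) = log₂(1 + α₁/(μ₁₁ + μ₁₂η₂ + 1)) and R₂(η₂) = log₂(1 + α₂η₂/(μ₁₁ + μ₁₂η₂ + 1)) for η₂ ∈ [0,1]. Then the parametric second derivative (R₁''R₂' − R₂''R₁')/(R₂')³ equals −[α₁μ₁₂(α₂(1+α₁+μ₁₁)+α₁μ₁₂)·(1+μ₁₁+μ₁₂η₂)·(1+μ₁₁+α₂η₂+μ₁₂η₂)] / [ζα₂²(1+μ₁₁)²(1+α₁+μ₁₁+μ₁₂η₂)²], where ζ = 1/ln 2, and hence is strictly negative for all η₂ ∈ [0,1]. -/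
open Real Set

private lemma key_log (a b η : ℝ) (h : 0 < a + b * η) :
    HasDerivAt (fun x => Real.log (a + b * x)) (b / (a + b * η)) η := by
  have h1 : HasDerivAt (fun x : ℝ => a + b * x) b η := by
    simpa using ((hasDerivAt_id η).const_mul b).const_add a
  have h2 := (Real.hasDerivAt_log (ne_of_gt h)).comp η h1
  rw [show b / (a + b * η) = (a + b * η)⁻¹ * b by ring]
  exact h2

private lemma key_inv (k a b η : ℝ) (h : 0 < a + b * η) :
    HasDerivAt (fun x => k / (a + b * x)) (-(k * b) / (a + b * η) ^ 2) η := by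
  have h1 : HasDerivAt (fun x : ℝ => a + b * x) b η := by
    simpa using ((hasDerivAt_id η).const_mul b).const_add a
  have h2 : HasDerivAt (fun x : ℝ => k * (a + b * x)⁻¹)
      (k * (-b / (a + b * η) ^ 2)) η := (h1.inv (ne_of_gt h)).const_mul k
  have h3 : (fun x : ℝ => k * (a + b * x)⁻¹) = fun x => k / (a + b * x) := by
    funext x; rw [div_eq_mul_inv]
  rw [h3] at h2
  convert h2 using 1; ring

set_option maxHeartbeats 2000000 in
private lemma key_alg (α₁ α₂ μ₁₂ c η L : ℝ)
    (hA : (0:ℝ) < c + α₁ + μ₁₂ * η) (hB : (0:ℝ) < c + μ₁₂ * η)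
    (hC : (0:ℝ) < c + (α₂ + μ₁₂) * η) (hL : 0 < L) (hα₂ : 0 < α₂) (hc : 0 < c) :
    ((α₁ * μ₁₂ ^ 2 * ((c + α₁ + μ₁₂ * η) + (c + μ₁₂ * η))
        / ((c + α₁ + μ₁₂ * η) ^ 2 * (c + μ₁₂ * η) ^ 2 * L))
      * (α₂ * c / ((c + μ₁₂ * η) * (c + (α₂ + μ₁₂) * η) * L))
     - (-(α₂ * c * ((α₂ + μ₁₂) * (c + μ₁₂ * η) + μ₁₂ * (c + (α₂ + μ₁₂) * η)))
        / ((c + μ₁₂ * η) ^ 2 * (c + (α₂ + μ₁₂) * η) ^ 2 * L))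
      * (-(α₁ * μ₁₂) / ((c + α₁ + μ₁₂ * η) * (c + μ₁₂ * η) * L)))
    / (α₂ * c / ((c + μ₁₂ * η) * (c + (α₂ + μ₁₂) * η) * L)) ^ 3
    = -(α₁ * μ₁₂ * (α₂ * (c + α₁) + α₁ * μ₁₂)
          * (c + μ₁₂ * η) * (c + (α₂ + μ₁₂) * η))
        / ((1 / L) * α₂ ^ 2 * c ^ 2 * (c + α₁ + μ₁₂ * η) ^ 2) := by
  have hAne := hA.ne'
  have hBne := hB.ne'
  have hCne := hC.ne'
  have hLne := hL.ne'
  have hα₂ne := hα₂.ne'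
  have hcne := hc.ne'
  field_simp
  ring

set_option maxHeartbeats 1600000 in
theorem stmt_1 (α₁ α₂ μ₁₁ μ₁₂ ζ : ℝ) (hα₁ : 0 < α₁) (hα₂ : 0 < α₂)
    (hμ₁₁ : 0 ≤ μ₁₁) (hμ₁₂ : 0 < μ₁₂) (hζ : ζ = 1 / Real.log 2)
    (R₁ R₂ : ℝ → ℝ)
    (hR₁ : ∀ η₂, R₁ η₂ = Real.logb 2 (1 + α₁ / (μ₁₁ + μ₁₂ * η₂ + 1)))
    (hR₂ : ∀ η₂, R₂ η₂ = Real.logb 2 (1 + α₂ * η₂ / (μ₁₁ + μ₁₂ * η₂ + 1))) :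
    ∀ η₂ ∈ Icc (0:ℝ) 1,
      (deriv (deriv R₁) η₂ * deriv R₂ η₂ - deriv (deriv R₂) η₂ * deriv R₁ η₂)
          / (deriv R₂ η₂) ^ 3
        = -(α₁ * μ₁₂ * (α₂ * (1 + α₁ + μ₁₁) + α₁ * μ₁₂)
              * (1 + μ₁₁ + μ₁₂ * η₂) * (1 + μ₁₁ + α₂ * η₂ + μ₁₂ * η₂))
            / (ζ * α₂ ^ 2 * (1 + μ₁₁) ^ 2 * (1 + α₁ + μ₁₁ + μ₁₂ * η₂) ^ 2)
      ∧ (deriv (deriv R₁) η₂ * deriv R₂ η₂ - deriv (deriv R₂) η₂ * deriv R₁ η₂)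
          / (deriv R₂ η₂) ^ 3 < 0 := by
  have hlog2 : 0 < Real.log 2 := Real.log_pos (by norm_num)
  set c : ℝ := μ₁₁ + 1 with hc
  have hc0 : (0:ℝ) < c := by rw [hc]; linarith
  set δ : ℝ := c / (α₂ + μ₁₂) with hδ
  have hδ0 : 0 < δ := by positivity
  have hδmul : δ * (α₂ + μ₁₂) = c := by
    rw [hδ]; field_simp
  set U : Set ℝ := Ioi (-δ) with hU
  have hUopen : IsOpen U := isOpen_Ioi
  have hCpos : ∀ η ∈ U, 0 < c + (α₂ + μ₁₂) * η := by
    intro η hη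
    have h : -δ < η := hη
    nlinarith
  have hBpos : ∀ η ∈ U, 0 < c + μ₁₂ * η := by
    intro η hη
    rcases le_or_gt 0 η with h | h
    · nlinarith
    · nlinarith [hCpos η hη]
  have hApos : ∀ η ∈ U, 0 < c + α₁ + μ₁₂ * η := by
    intro η hη; nlinarith [hBpos η hη]
  -- explicit forms on U
  have hR₁U : ∀ η ∈ U, R₁ η =
      (Real.log (c + α₁ + μ₁₂ * η) - Real.log (c + μ₁₂ * η)) / Real.log 2 := by
    intro η hη
    have hB := hBpos η hη
    have hA := hApos η hη
    have hne : μ₁₁ + μ₁₂ * η + 1 = c + μ₁₂ * η := by rw [hc]; ring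
    rw [hR₁, Real.logb, hne]
    congr 1
    have harg : 1 + α₁ / (c + μ₁₂ * η) = (c + α₁ + μ₁₂ * η) / (c + μ₁₂ * η) := by
      field_simp; ring
    rw [harg, Real.log_div (ne_of_gt hA) (ne_of_gt hB)]
  have hR₂U : ∀ η ∈ U, R₂ η =
      (Real.log (c + (α₂ + μ₁₂) * η) - Real.log (c + μ₁₂ * η)) / Real.log 2 := by
    intro η hη
    have hB := hBpos η hη
    have hC := hCpos η hη
    have hne : μ₁₁ + μ₁₂ * η + 1 = c + μ₁₂ * η := by rw [hc]; ring
    rw [hR₂, Real.logb, hne]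
    congr 1
    have harg : 1 + α₂ * η / (c + μ₁₂ * η) = (c + (α₂ + μ₁₂) * η) / (c + μ₁₂ * η) := by
      rw [eq_div_iff (ne_of_gt hB), add_mul, div_mul_cancel₀ _ (ne_of_gt hB)]; ring
    rw [harg, Real.log_div (ne_of_gt hC) (ne_of_gt hB)]
  -- first derivatives
  set g₁ : ℝ → ℝ := fun η =>
    (μ₁₂ / (c + α₁ + μ₁₂ * η) - μ₁₂ / (c + μ₁₂ * η)) / Real.log 2 with hg₁def
  set g₂ : ℝ → ℝ := fun η =>
    ((α₂ + μ₁₂) / (c + (α₂ + μ₁₂) * η) - μ₁₂ / (c + μ₁₂ * η)) / Real.log 2 with hg₂def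
  have hder₁ : ∀ η ∈ U, HasDerivAt R₁ (g₁ η) η := by
    intro η hη
    have h := ((key_log (c + α₁) μ₁₂ η (hApos η hη)).sub
      (key_log c μ₁₂ η (hBpos η hη))).div_const (Real.log 2)
    exact h.congr_of_eventuallyEq
      (Filter.eventuallyEq_of_mem (hUopen.mem_nhds hη) (fun x hx => hR₁U x hx))
  have hder₂ : ∀ η ∈ U, HasDerivAt R₂ (g₂ η) η := by
    intro η hη
    have h := ((key_log c (α₂ + μ₁₂) η (hCpos η hη)).sub
      (key_log c μ₁₂ η (hBpos η hη))).div_const (Real.log 2)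
    exact h.congr_of_eventuallyEq
      (Filter.eventuallyEq_of_mem (hUopen.mem_nhds hη) (fun x hx => hR₂U x hx))
  have hdR₁ : ∀ η ∈ U, deriv R₁ η = g₁ η := fun η hη => (hder₁ η hη).deriv
  have hdR₂ : ∀ η ∈ U, deriv R₂ η = g₂ η := fun η hη => (hder₂ η hη).deriv
  intro η₂ hη₂
  obtain ⟨hη₂0, hη₂1⟩ := hη₂
  have hη₂U : η₂ ∈ U := by
    simp only [hU, mem_Ioi]; linarith
  have hA := hApos η₂ hη₂U
  have hB := hBpos η₂ hη₂U
  have hC := hCpos η₂ hη₂U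
  -- second derivatives
  have hg₁' : HasDerivAt g₁
      ((-(μ₁₂ * μ₁₂) / (c + α₁ + μ₁₂ * η₂) ^ 2 - -(μ₁₂ * μ₁₂) / (c + μ₁₂ * η₂) ^ 2)
        / Real.log 2) η₂ :=
    ((key_inv μ₁₂ (c + α₁) μ₁₂ η₂ hA).sub (key_inv μ₁₂ c μ₁₂ η₂ hB)).div_const _
  have hg₂' : HasDerivAt g₂
      ((-((α₂ + μ₁₂) * (α₂ + μ₁₂)) / (c + (α₂ + μ₁₂) * η₂) ^ 2
          - -(μ₁₂ * μ₁₂) / (c + μ₁₂ * η₂) ^ 2) / Real.log 2) η₂ :=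
    ((key_inv (α₂ + μ₁₂) c (α₂ + μ₁₂) η₂ hC).sub (key_inv μ₁₂ c μ₁₂ η₂ hB)).div_const _
  have ev₁ : deriv R₁ =ᶠ[nhds η₂] g₁ :=
    Filter.eventuallyEq_of_mem (hUopen.mem_nhds hη₂U) (fun x hx => hdR₁ x hx)
  have ev₂ : deriv R₂ =ᶠ[nhds η₂] g₂ :=
    Filter.eventuallyEq_of_mem (hUopen.mem_nhds hη₂U) (fun x hx => hdR₂ x hx)
  have e1 : deriv (deriv R₁) η₂ =
      α₁ * μ₁₂ ^ 2 * ((c + α₁ + μ₁₂ * η₂) + (c + μ₁₂ * η₂))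
        / ((c + α₁ + μ₁₂ * η₂) ^ 2 * (c + μ₁₂ * η₂) ^ 2 * Real.log 2) := by
    rw [ev₁.deriv_eq, hg₁'.deriv]
    field_simp
    ring
  have e2 : deriv (deriv R₂) η₂ =
      -(α₂ * c * ((α₂ + μ₁₂) * (c + μ₁₂ * η₂) + μ₁₂ * (c + (α₂ + μ₁₂) * η₂)))
        / ((c + μ₁₂ * η₂) ^ 2 * (c + (α₂ + μ₁₂) * η₂) ^ 2 * Real.log 2) := by
    rw [ev₂.deriv_eq, hg₂'.deriv]
    field_simp
    ring
  have e3 : deriv R₁ η₂ =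
      -(α₁ * μ₁₂) / ((c + α₁ + μ₁₂ * η₂) * (c + μ₁₂ * η₂) * Real.log 2) := by
    rw [hdR₁ η₂ hη₂U, hg₁def]
    field_simp
    ring
  have e4 : deriv R₂ η₂ =
      α₂ * c / ((c + μ₁₂ * η₂) * (c + (α₂ + μ₁₂) * η₂) * Real.log 2) := by
    rw [hdR₂ η₂ hη₂U, hg₂def]
    field_simp
    ring
  have hrw₂ : (1:ℝ) + μ₁₁ + α₂ * η₂ + μ₁₂ * η₂ = c + (α₂ + μ₁₂) * η₂ := by rw [hc]; ring
  have hrw₁ : (1:ℝ) + μ₁₁ + μ₁₂ * η₂ = c + μ₁₂ * η₂ := by rw [hc]; ring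
  have hrw₄ : (1:ℝ) + α₁ + μ₁₁ + μ₁₂ * η₂ = c + α₁ + μ₁₂ * η₂ := by rw [hc]; ring
  have hrw₅ : (1:ℝ) + α₁ + μ₁₁ = c + α₁ := by rw [hc]; ring
  have hrw₃ : (1:ℝ) + μ₁₁ = c := by rw [hc]; ring
  have key : (deriv (deriv R₁) η₂ * deriv R₂ η₂ - deriv (deriv R₂) η₂ * deriv R₁ η₂)
          / (deriv R₂ η₂) ^ 3
        = -(α₁ * μ₁₂ * (α₂ * (1 + α₁ + μ₁₁) + α₁ * μ₁₂)
              * (1 + μ₁₁ + μ₁₂ * η₂) * (1 + μ₁₁ + α₂ * η₂ + μ₁₂ * η₂))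
            / (ζ * α₂ ^ 2 * (1 + μ₁₁) ^ 2 * (1 + α₁ + μ₁₁ + μ₁₂ * η₂) ^ 2) := by
    rw [e1, e2, e3, e4, hζ, hrw₂, hrw₁, hrw₄, hrw₅, hrw₃]
    exact key_alg α₁ α₂ μ₁₂ c η₂ (Real.log 2) hA hB hC hlog2 hα₂ hc0
  refine ⟨key, ?_⟩
  rw [key]
  have hζ0 : 0 < ζ := by rw [hζ]; positivity
  have hN : 0 < α₁ * μ₁₂ * (α₂ * (1 + α₁ + μ₁₁) + α₁ * μ₁₂)
      * (1 + μ₁₁ + μ₁₂ * η₂) * (1 + μ₁₁ + α₂ * η₂ + μ₁₂ * η₂) := by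
    have h1 : (0:ℝ) < 1 + μ₁₁ + μ₁₂ * η₂ := by nlinarith
    have h2 : (0:ℝ) < 1 + μ₁₁ + α₂ * η₂ + μ₁₂ * η₂ := by nlinarith
    have h3 : (0:ℝ) < α₂ * (1 + α₁ + μ₁₁) + α₁ * μ₁₂ := by nlinarith
    positivity
  have hD : 0 < ζ * α₂ ^ 2 * (1 + μ₁₁) ^ 2 * (1 + α₁ + μ₁₁ + μ₁₂ * η₂) ^ 2 := by
    have h4 : (0:ℝ) < 1 + α₁ + μ₁₁ + μ₁₂ * η₂ := by nlinarith
    positivity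
  exact div_neg_of_neg_of_pos (neg_neg_of_pos hN) hD
end

section
/- Let α > 0 and μ ≥ 0. Define R₁(η) = log₂(1 + αη/(1 + μ(1−η))) and R₂(η) = log₂(1 + α(1−η)/(1 + μη)) for η ∈ [0,1]. Then the parametric second derivative (R₁''R₂' − R₂''R₁')/(R₂')³ is ≤ 0 for all η ∈ [0,1] if and only if α ≥ μ(2+μ). -/
open Real Set

lemma aux_affine (c d t : ℝ) : HasDerivAt (fun s : ℝ => c + d * s) d t := by
  simpa using ((hasDerivAt_id t).const_mul d).const_add c

-- first derivative of R1-type function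
lemma aux_R1_deriv (α μ : ℝ) (R₁ : ℝ → ℝ)
    (hR₁ : ∀ η, R₁ η = Real.logb 2 (1 + α * η / (1 + μ * (1 - η))))
    (t : ℝ) (hn : 0 < 1 + μ * (1 - t) + α * t) (hb : 0 < 1 + μ * (1 - t)) :
    HasDerivAt R₁ (((α - μ) / (1 + μ * (1 - t) + α * t) + μ / (1 + μ * (1 - t))) / Real.log 2) t := by
  set S : Set ℝ := {s | 0 < 1 + μ * (1 - s) + α * s} ∩ {s | 0 < 1 + μ * (1 - s)} with hSdef
  have hSo : IsOpen S :=
    (isOpen_lt continuous_const (by fun_prop)).inter (isOpen_lt continuous_const (by fun_prop))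
  have htS : t ∈ S := ⟨hn, hb⟩
  have hEq : Set.EqOn R₁
      (fun s => (Real.log (1 + μ * (1 - s) + α * s) - Real.log (1 + μ * (1 - s))) / Real.log 2) S := by
    intro s hs
    obtain ⟨h1, h2⟩ := hs
    simp only [Set.mem_setOf_eq] at h1 h2
    rw [hR₁]
    have e : 1 + α * s / (1 + μ * (1 - s)) = (1 + μ * (1 - s) + α * s) / (1 + μ * (1 - s)) := by
      field_simp [ne_of_gt h2]
    rw [e, ← Real.log_div_log, Real.log_div (ne_of_gt h1) (ne_of_gt h2)]
  have hF : HasDerivAt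
      (fun s => (Real.log (1 + μ * (1 - s) + α * s) - Real.log (1 + μ * (1 - s))) / Real.log 2)
      (((α - μ) / (1 + μ * (1 - t) + α * t) + μ / (1 + μ * (1 - t))) / Real.log 2) t := by
    have e1 : (fun s : ℝ => (Real.log (1 + μ * (1 - s) + α * s) - Real.log (1 + μ * (1 - s))) / Real.log 2)
        = fun s : ℝ => (Real.log ((1 + μ) + (α - μ) * s) - Real.log ((1 + μ) + (-μ) * s)) / Real.log 2 := by
      funext s
      rw [show 1 + μ * (1 - s) + α * s = (1 + μ) + (α - μ) * s from by ring,
        show 1 + μ * (1 - s) = (1 + μ) + (-μ) * s from by ring]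
    have hn' : (1 + μ) + (α - μ) * t ≠ 0 := by
      have : (1 + μ) + (α - μ) * t = 1 + μ * (1 - t) + α * t := by ring
      rw [this]; exact ne_of_gt hn
    have hb' : (1 + μ) + (-μ) * t ≠ 0 := by
      have : (1 + μ) + (-μ) * t = 1 + μ * (1 - t) := by ring
      rw [this]; exact ne_of_gt hb
    have hN := (aux_affine (1 + μ) (α - μ) t).log hn'
    have hB := (aux_affine (1 + μ) (-μ) t).log hb'
    have h := (hN.sub hB).div_const (Real.log 2)
    rw [e1]
    convert h using 1
    · rfl
    · rfl
    · rfl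
    have c1 : (1 + μ) + (α - μ) * t = 1 + μ * (1 - t) + α * t := by ring
    have c2 : (1 + μ) + (-μ) * t = 1 + μ * (1 - t) := by ring
    rw [c1, c2]; ring
  exact hF.congr_of_eventuallyEq (Filter.eventuallyEq_of_mem (hSo.mem_nhds htS) hEq)

lemma aux_R2_deriv (α μ : ℝ) (R₂ : ℝ → ℝ)
    (hR₂ : ∀ η, R₂ η = Real.logb 2 (1 + α * (1 - η) / (1 + μ * η)))
    (t : ℝ) (hn : 0 < 1 + μ * t + α * (1 - t)) (hb : 0 < 1 + μ * t) :
    HasDerivAt R₂ (((μ - α) / (1 + μ * t + α * (1 - t)) - μ / (1 + μ * t)) / Real.log 2) t := by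
  set S : Set ℝ := {s | 0 < 1 + μ * s + α * (1 - s)} ∩ {s | 0 < 1 + μ * s} with hSdef
  have hSo : IsOpen S :=
    (isOpen_lt continuous_const (by fun_prop)).inter (isOpen_lt continuous_const (by fun_prop))
  have htS : t ∈ S := ⟨hn, hb⟩
  have hEq : Set.EqOn R₂
      (fun s => (Real.log (1 + μ * s + α * (1 - s)) - Real.log (1 + μ * s)) / Real.log 2) S := by
    intro s hs
    obtain ⟨h1, h2⟩ := hs
    simp only [Set.mem_setOf_eq] at h1 h2
    rw [hR₂]
    have e : 1 + α * (1 - s) / (1 + μ * s) = (1 + μ * s + α * (1 - s)) / (1 + μ * s) := by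
      rw [add_div, div_self (ne_of_gt h2)]
    rw [e, ← Real.log_div_log, Real.log_div (ne_of_gt h1) (ne_of_gt h2)]
  have hF : HasDerivAt
      (fun s => (Real.log (1 + μ * s + α * (1 - s)) - Real.log (1 + μ * s)) / Real.log 2)
      (((μ - α) / (1 + μ * t + α * (1 - t)) - μ / (1 + μ * t)) / Real.log 2) t := by
    have e1 : (fun s : ℝ => (Real.log (1 + μ * s + α * (1 - s)) - Real.log (1 + μ * s)) / Real.log 2)
        = fun s : ℝ => (Real.log ((1 + α) + (μ - α) * s) - Real.log (1 + μ * s)) / Real.log 2 := by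
      funext s
      rw [show 1 + μ * s + α * (1 - s) = (1 + α) + (μ - α) * s from by ring]
    have hn' : (1 + α) + (μ - α) * t ≠ 0 := by
      have : (1 + α) + (μ - α) * t = 1 + μ * t + α * (1 - t) := by ring
      rw [this]; exact ne_of_gt hn
    have hb' : (1 : ℝ) + μ * t ≠ 0 := ne_of_gt hb
    have hN := (aux_affine (1 + α) (μ - α) t).log hn'
    have hB := (aux_affine 1 μ t).log hb'
    have h := (hN.sub hB).div_const (Real.log 2)
    rw [e1]
    convert h using 1
    · rfl
    · rfl
    · rfl
    have c1 : (1 + α) + (μ - α) * t = 1 + μ * t + α * (1 - t) := by ring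
    rw [c1]
  exact hF.congr_of_eventuallyEq (Filter.eventuallyEq_of_mem (hSo.mem_nhds htS) hEq)

lemma aux_G1_deriv (α μ t : ℝ) (hn : 0 < 1 + μ * (1 - t) + α * t) (hb : 0 < 1 + μ * (1 - t)) :
    HasDerivAt (fun s => ((α - μ) / (1 + μ * (1 - s) + α * s) + μ / (1 + μ * (1 - s))) / Real.log 2)
      ((-(α - μ) ^ 2 / (1 + μ * (1 - t) + α * t) ^ 2 + μ ^ 2 / (1 + μ * (1 - t)) ^ 2) / Real.log 2) t := by
  have hn' : (1 + μ) + (α - μ) * t ≠ 0 := by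
    have : (1 + μ) + (α - μ) * t = 1 + μ * (1 - t) + α * t := by ring
    rw [this]; exact ne_of_gt hn
  have hb' : (1 + μ) + (-μ) * t ≠ 0 := by
    have : (1 + μ) + (-μ) * t = 1 + μ * (1 - t) := by ring
    rw [this]; exact ne_of_gt hb
  have h1 := ((aux_affine (1 + μ) (α - μ) t).inv hn').const_mul (α - μ)
  have h2 := ((aux_affine (1 + μ) (-μ) t).inv hb').const_mul μ
  have h := (h1.add h2).div_const (Real.log 2)
  have e1 : (fun s => ((α - μ) / (1 + μ * (1 - s) + α * s) + μ / (1 + μ * (1 - s))) / Real.log 2)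
      = fun s => ((α - μ) * ((1 + μ) + (α - μ) * s)⁻¹ + μ * ((1 + μ) + (-μ) * s)⁻¹) / Real.log 2 := by
    funext s
    rw [show 1 + μ * (1 - s) + α * s = (1 + μ) + (α - μ) * s from by ring,
      show 1 + μ * (1 - s) = (1 + μ) + (-μ) * s from by ring]
    ring
  rw [e1]
  convert h using 1
  · rfl
  · rfl
  · rfl
  rw [show (1 + μ) + (α - μ) * t = 1 + μ * (1 - t) + α * t from by ring,
    show (1 + μ) + (-μ) * t = 1 + μ * (1 - t) from by ring]
  ring

lemma aux_G2_deriv (α μ t : ℝ) (hn : 0 < 1 + μ * t + α * (1 - t)) (hb : 0 < 1 + μ * t) :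
    HasDerivAt (fun s => ((μ - α) / (1 + μ * s + α * (1 - s)) - μ / (1 + μ * s)) / Real.log 2)
      ((-(μ - α) ^ 2 / (1 + μ * t + α * (1 - t)) ^ 2 + μ ^ 2 / (1 + μ * t) ^ 2) / Real.log 2) t := by
  have hn' : (1 + α) + (μ - α) * t ≠ 0 := by
    have : (1 + α) + (μ - α) * t = 1 + μ * t + α * (1 - t) := by ring
    rw [this]; exact ne_of_gt hn
  have hb' : (1 : ℝ) + μ * t ≠ 0 := ne_of_gt hb
  have h1 := ((aux_affine (1 + α) (μ - α) t).inv hn').const_mul (μ - α)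
  have h2 := ((aux_affine 1 μ t).inv hb').const_mul μ
  have h := (h1.sub h2).div_const (Real.log 2)
  have e1 : (fun s => ((μ - α) / (1 + μ * s + α * (1 - s)) - μ / (1 + μ * s)) / Real.log 2)
      = fun s => ((μ - α) * ((1 + α) + (μ - α) * s)⁻¹ - μ * (1 + μ * s)⁻¹) / Real.log 2 := by
    funext s
    rw [show 1 + μ * s + α * (1 - s) = (1 + α) + (μ - α) * s from by ring]
    ring
  rw [e1]
  convert h using 1
  · rfl
  · rfl
  · rfl
  rw [show (1 + α) + (μ - α) * t = 1 + μ * t + α * (1 - t) from by ring]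
  ring

lemma aux_R1_deriv2 (α μ : ℝ) (R₁ : ℝ → ℝ)
    (hR₁ : ∀ η, R₁ η = Real.logb 2 (1 + α * η / (1 + μ * (1 - η))))
    (t : ℝ) (hn : 0 < 1 + μ * (1 - t) + α * t) (hb : 0 < 1 + μ * (1 - t)) :
    deriv (deriv R₁) t
      = (-(α - μ) ^ 2 / (1 + μ * (1 - t) + α * t) ^ 2 + μ ^ 2 / (1 + μ * (1 - t)) ^ 2) / Real.log 2 := by
  set S : Set ℝ := {s | 0 < 1 + μ * (1 - s) + α * s} ∩ {s | 0 < 1 + μ * (1 - s)} with hSdef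
  have hSo : IsOpen S :=
    (isOpen_lt continuous_const (by fun_prop)).inter (isOpen_lt continuous_const (by fun_prop))
  have htS : t ∈ S := ⟨hn, hb⟩
  have hEq : Set.EqOn (deriv R₁)
      (fun s => ((α - μ) / (1 + μ * (1 - s) + α * s) + μ / (1 + μ * (1 - s))) / Real.log 2) S :=
    fun s hs => (aux_R1_deriv α μ R₁ hR₁ s hs.1 hs.2).deriv
  have hev := Filter.EventuallyEq.deriv_eq (f₁ := deriv R₁)
    (Filter.eventuallyEq_of_mem (hSo.mem_nhds htS) hEq)
  rw [hev, (aux_G1_deriv α μ t hn hb).deriv]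

lemma aux_R2_deriv2 (α μ : ℝ) (R₂ : ℝ → ℝ)
    (hR₂ : ∀ η, R₂ η = Real.logb 2 (1 + α * (1 - η) / (1 + μ * η)))
    (t : ℝ) (hn : 0 < 1 + μ * t + α * (1 - t)) (hb : 0 < 1 + μ * t) :
    deriv (deriv R₂) t
      = (-(μ - α) ^ 2 / (1 + μ * t + α * (1 - t)) ^ 2 + μ ^ 2 / (1 + μ * t) ^ 2) / Real.log 2 := by
  set S : Set ℝ := {s | 0 < 1 + μ * s + α * (1 - s)} ∩ {s | 0 < 1 + μ * s} with hSdef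
  have hSo : IsOpen S :=
    (isOpen_lt continuous_const (by fun_prop)).inter (isOpen_lt continuous_const (by fun_prop))
  have htS : t ∈ S := ⟨hn, hb⟩
  have hEq : Set.EqOn (deriv R₂)
      (fun s => ((μ - α) / (1 + μ * s + α * (1 - s)) - μ / (1 + μ * s)) / Real.log 2) S :=
    fun s hs => (aux_R2_deriv α μ R₂ hR₂ s hs.1 hs.2).deriv
  have hev := Filter.EventuallyEq.deriv_eq (f₁ := deriv R₂)
    (Filter.eventuallyEq_of_mem (hSo.mem_nhds htS) hEq)
  rw [hev, (aux_G2_deriv α μ t hn hb).deriv]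

lemma aux_assemble (w1 w2 a n1 b1 n2 b2 L : ℝ) (ha : a ≠ 0) (hn1 : n1 ≠ 0) (hb1 : b1 ≠ 0)
    (hn2 : n2 ≠ 0) (hb2 : b2 ≠ 0) (hL : L ≠ 0) :
    (a * w1 / (n1 ^ 2 * b1 ^ 2) / L * (-(a) / (n2 * b2) / L)
        - a * w2 / (n2 ^ 2 * b2 ^ 2) / L * (a / (n1 * b1) / L))
      / (-(a) / (n2 * b2) / L) ^ 3
      = (w1 * (n2 * b2) + w2 * (n1 * b1)) * (n2 * b2) * L / (n1 ^ 2 * b1 ^ 2 * a) := by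
  have hc : (-(a) / (n2 * b2) / L) ^ 3 ≠ 0 := by
    apply pow_ne_zero
    exact div_ne_zero (div_ne_zero (neg_ne_zero.mpr ha) (mul_ne_zero hn2 hb2)) hL
  rw [div_eq_iff hc]
  field_simp
  ring

theorem stmt_3 (α μ : ℝ) (hα : 0 < α) (hμ : 0 ≤ μ)
    (R₁ R₂ : ℝ → ℝ)
    (hR₁ : ∀ η, R₁ η = Real.logb 2 (1 + α * η / (1 + μ * (1 - η))))
    (hR₂ : ∀ η, R₂ η = Real.logb 2 (1 + α * (1 - η) / (1 + μ * η))) :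
    (∀ η ∈ Icc (0:ℝ) 1,
        (deriv (deriv R₁) η * deriv R₂ η - deriv (deriv R₂) η * deriv R₁ η)
          / (deriv R₂ η) ^ 3 ≤ 0)
      ↔ α ≥ μ * (2 + μ) := by
  have hL : 0 < Real.log 2 := Real.log_pos one_lt_two
  have key : ∀ t ∈ Icc (0:ℝ) 1,
      ((deriv (deriv R₁) t * deriv R₂ t - deriv (deriv R₂) t * deriv R₁ t)
          / (deriv R₂ t) ^ 3 ≤ 0
        ↔ 0 ≤ (α - μ * (2 + μ)) * ((1 + μ) * (α + 2) - 2 * μ * (α - μ) * (t * (1 - t)))) := by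
    intro t ht
    obtain ⟨ht0, ht1⟩ := ht
    have hμ1 : 0 ≤ μ * (1 - t) := mul_nonneg hμ (by linarith)
    have hμ2 : 0 ≤ μ * t := mul_nonneg hμ ht0
    have hα1 : 0 ≤ α * t := mul_nonneg hα.le ht0
    have hα2 : 0 ≤ α * (1 - t) := mul_nonneg hα.le (by linarith)
    have hb1 : 0 < 1 + μ * (1 - t) := by linarith
    have hn1 : 0 < 1 + μ * (1 - t) + α * t := by linarith
    have hb2 : 0 < 1 + μ * t := by linarith
    have hn2 : 0 < 1 + μ * t + α * (1 - t) := by linarith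
    rw [(aux_R1_deriv α μ R₁ hR₁ t hn1 hb1).deriv, (aux_R2_deriv α μ R₂ hR₂ t hn2 hb2).deriv,
      aux_R1_deriv2 α μ R₁ hR₁ t hn1 hb1, aux_R2_deriv2 α μ R₂ hR₂ t hn2 hb2]
    have hg1 : (α - μ) / (1 + μ * (1 - t) + α * t) + μ / (1 + μ * (1 - t))
        = α * (1 + μ) / ((1 + μ * (1 - t) + α * t) * (1 + μ * (1 - t))) := by
      field_simp; ring
    have hg2 : (μ - α) / (1 + μ * t + α * (1 - t)) - μ / (1 + μ * t)
        = -(α * (1 + μ)) / ((1 + μ * t + α * (1 - t)) * (1 + μ * t)) := by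
      field_simp; ring
    have hh1 : -(α - μ) ^ 2 / (1 + μ * (1 - t) + α * t) ^ 2 + μ ^ 2 / (1 + μ * (1 - t)) ^ 2
        = α * (1 + μ) * ((2 * μ - α) * (1 + μ * (1 - t)) + μ * α * t)
          / ((1 + μ * (1 - t) + α * t) ^ 2 * (1 + μ * (1 - t)) ^ 2) := by
      field_simp; ring
    have hh2 : -(μ - α) ^ 2 / (1 + μ * t + α * (1 - t)) ^ 2 + μ ^ 2 / (1 + μ * t) ^ 2
        = α * (1 + μ) * ((2 * μ - α) * (1 + μ * t) + μ * α * (1 - t))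
          / ((1 + μ * t + α * (1 - t)) ^ 2 * (1 + μ * t) ^ 2) := by
      field_simp; ring
    rw [hg1, hg2, hh1, hh2]
    have ha : α * (1 + μ) ≠ 0 := by positivity
    rw [aux_assemble ((2 * μ - α) * (1 + μ * (1 - t)) + μ * α * t)
        ((2 * μ - α) * (1 + μ * t) + μ * α * (1 - t)) (α * (1 + μ))
        (1 + μ * (1 - t) + α * t) (1 + μ * (1 - t)) (1 + μ * t + α * (1 - t)) (1 + μ * t)
        (Real.log 2) ha hn1.ne' hb1.ne' hn2.ne' hb2.ne' hL.ne']
    have hsum : ((2 * μ - α) * (1 + μ * (1 - t)) + μ * α * t)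
          * ((1 + μ * t + α * (1 - t)) * (1 + μ * t))
        + ((2 * μ - α) * (1 + μ * t) + μ * α * (1 - t))
          * ((1 + μ * (1 - t) + α * t) * (1 + μ * (1 - t)))
        = -((α - μ * (2 + μ)) * ((1 + μ) * (α + 2) - 2 * μ * (α - μ) * (t * (1 - t)))) := by
      ring
    rw [hsum]
    have hc : 0 < ((1 + μ * t + α * (1 - t)) * (1 + μ * t)) * Real.log 2
        / ((1 + μ * (1 - t) + α * t) ^ 2 * (1 + μ * (1 - t)) ^ 2 * (α * (1 + μ))) := by
      apply div_pos
      · exact mul_pos (mul_pos hn2 hb2) hL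
      · apply mul_pos (mul_pos (pow_pos hn1 2) (pow_pos hb1 2)); positivity
    have heq : -((α - μ * (2 + μ)) * ((1 + μ) * (α + 2) - 2 * μ * (α - μ) * (t * (1 - t))))
          * ((1 + μ * t + α * (1 - t)) * (1 + μ * t)) * Real.log 2
          / ((1 + μ * (1 - t) + α * t) ^ 2 * (1 + μ * (1 - t)) ^ 2 * (α * (1 + μ)))
        = -(((α - μ * (2 + μ)) * ((1 + μ) * (α + 2) - 2 * μ * (α - μ) * (t * (1 - t))))
            * (((1 + μ * t + α * (1 - t)) * (1 + μ * t)) * Real.log 2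
              / ((1 + μ * (1 - t) + α * t) ^ 2 * (1 + μ * (1 - t)) ^ 2 * (α * (1 + μ))))) := by
      ring
    rw [heq, neg_nonpos]
    constructor
    · intro h
      by_contra hP
      push_neg at hP
      nlinarith [mul_neg_of_neg_of_pos hP hc]
    · intro h
      exact mul_nonneg h hc.le
  constructor
  · intro h
    have h0 := (key 0 (by norm_num)).mp (h 0 (by norm_num))
    norm_num at h0
    by_contra hcon
    push_neg at hcon
    nlinarith [mul_pos (show (0:ℝ) < 1 + μ by linarith) (show (0:ℝ) < α + 2 by linarith)]
  · intro hge t ht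
    apply (key t ht).mpr
    obtain ⟨ht0, ht1⟩ := ht
    have hK : 0 < (1 + μ) * (α + 2) - 2 * μ * (α - μ) * (t * (1 - t)) := by
      have h14 : t * (1 - t) ≤ 1 / 4 := by nlinarith [sq_nonneg (2 * t - 1)]
      have h0u : 0 ≤ t * (1 - t) := mul_nonneg ht0 (by linarith)
      nlinarith [mul_le_mul_of_nonneg_left h14 (by positivity : (0:ℝ) ≤ 2 * μ * α),
        mul_nonneg (by positivity : (0:ℝ) ≤ 2 * μ ^ 2) h0u, mul_nonneg hμ hα.le]
    exact mul_nonneg (by linarith) hK.le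
end

section
/- Let α > 0 and μ ≥ 0 with α ≥ μ(2+μ). Then for R₁(η) = log₂(1 + αη/(1+μ(1−η))) and R₂(η) = log₂(1 + α(1−η)/(1+μη)) on [0,1], the map from R₂(η) ∈ [0, log₂(1+α)] to R₁(η) is concave; i.e., the downlink LoS two-user rate region with equal gains is convex. -/
open Real Set

/-- Two-term Hölder inequality. -/
lemma hoelder2 {p q a₁ a₂ b₁ b₂ : ℝ} (hp : 0 < p) (hq : 0 < q) (hpq : p + q = 1)
    (ha₁ : 0 ≤ a₁) (hb₁ : 0 ≤ b₁) (ha₂ : 0 ≤ a₂) (hb₂ : 0 ≤ b₂)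
    (h₁ : 0 < a₁ + b₁) (h₂ : 0 < a₂ + b₂) :
    a₁ ^ p * a₂ ^ q + b₁ ^ p * b₂ ^ q ≤ (a₁ + b₁) ^ p * (a₂ + b₂) ^ q := by
  have hA := h₁
  have hB := h₂
  have k1 := Real.geom_mean_le_arith_mean2_weighted hp.le hq.le
    (div_nonneg ha₁ hA.le) (div_nonneg ha₂ hB.le) hpq
  have k2 := Real.geom_mean_le_arith_mean2_weighted hp.le hq.le
    (div_nonneg hb₁ hA.le) (div_nonneg hb₂ hB.le) hpq
  have hsum : (a₁ / (a₁ + b₁)) ^ p * (a₂ / (a₂ + b₂)) ^ q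
      + (b₁ / (a₁ + b₁)) ^ p * (b₂ / (a₂ + b₂)) ^ q ≤ 1 := by
    have : p * (a₁ / (a₁ + b₁)) + q * (a₂ / (a₂ + b₂))
        + (p * (b₁ / (a₁ + b₁)) + q * (b₂ / (a₂ + b₂))) = 1 := by
      field_simp
      linear_combination (a₁ * a₂ + a₁ * b₂ + a₂ * b₁ + b₂ * b₁) * hpq
    linarith
  have hmul : ((a₁ / (a₁ + b₁)) ^ p * (a₂ / (a₂ + b₂)) ^ q
      + (b₁ / (a₁ + b₁)) ^ p * (b₂ / (a₂ + b₂)) ^ q) * ((a₁ + b₁) ^ p * (a₂ + b₂) ^ q)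
      ≤ 1 * ((a₁ + b₁) ^ p * (a₂ + b₂) ^ q) := by
    apply mul_le_mul_of_nonneg_right hsum
    positivity
  rw [one_mul] at hmul
  calc a₁ ^ p * a₂ ^ q + b₁ ^ p * b₂ ^ q
      = ((a₁ / (a₁ + b₁)) ^ p * (a₂ / (a₂ + b₂)) ^ q
      + (b₁ / (a₁ + b₁)) ^ p * (b₂ / (a₂ + b₂)) ^ q) * ((a₁ + b₁) ^ p * (a₂ + b₂) ^ q) := by
        rw [Real.div_rpow ha₁ hA.le, Real.div_rpow ha₂ hB.le,
          Real.div_rpow hb₁ hA.le, Real.div_rpow hb₂ hB.le]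
        have hAp : (a₁ + b₁) ^ p ≠ 0 := by positivity
        have hBq : (a₂ + b₂) ^ q ≠ 0 := by positivity
        field_simp
        try ring
    _ ≤ (a₁ + b₁) ^ p * (a₂ + b₂) ^ q := hmul


lemma log_sub_exp_concave {a b k : ℝ} (hb : 0 ≤ b) {S : Set ℝ} (hS : Convex ℝ S)
    (hpos : ∀ t ∈ S, 0 < a - b * Real.exp (k * t)) :
    ConcaveOn ℝ S (fun t => Real.log (a - b * Real.exp (k * t))) := by
  refine ⟨hS, fun x hx y hy p q hp hq hpq => ?_⟩
  have hfx := hpos x hx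
  have hfy := hpos y hy
  have hmid : p • x + q • y ∈ S := hS hx hy hp hq hpq
  have hfm := hpos _ hmid
  -- exp convexity
  have hexp : Real.exp (k * (p • x + q • y)) ≤ p * Real.exp (k * x) + q * Real.exp (k * y) := by
    have := convexOn_exp.2 (mem_univ (k * x)) (mem_univ (k * y)) hp hq hpq
    simp only [smul_eq_mul] at this ⊢
    calc Real.exp (k * (p * x + q * y)) = Real.exp (p * (k * x) + q * (k * y)) := by ring_nf
      _ ≤ p * Real.exp (k * x) + q * Real.exp (k * y) := this
  have step1 : p * (a - b * Real.exp (k * x)) + q * (a - b * Real.exp (k * y))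
      ≤ a - b * Real.exp (k * (p • x + q • y)) := by
    simp only [smul_eq_mul] at hexp ⊢
    have ha' : p * a + q * a = a := by linear_combination a * hpq
    nlinarith [mul_le_mul_of_nonneg_left hexp hb, ha']
  have hpos2 : 0 < p * (a - b * Real.exp (k * x)) + q * (a - b * Real.exp (k * y)) := by
    rcases hp.eq_or_lt with h | h
    · rcases hq.eq_or_lt with h' | h'
      · exfalso; rw [← h, ← h'] at hpq; norm_num at hpq
      · rw [← h]; simpa using mul_pos h' hfy
    · rcases hq.eq_or_lt with h' | h'
      · rw [← h']; simpa using mul_pos h hfx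
      · positivity
  have hlog1 : p • Real.log (a - b * Real.exp (k * x)) + q • Real.log (a - b * Real.exp (k * y))
      ≤ Real.log (p * (a - b * Real.exp (k * x)) + q * (a - b * Real.exp (k * y))) := by
    have := strictConcaveOn_log_Ioi.concaveOn.2 (mem_Ioi.2 hfx) (mem_Ioi.2 hfy) hp hq hpq
    simpa using this
  calc p • Real.log (a - b * Real.exp (k * x)) + q • Real.log (a - b * Real.exp (k * y))
      ≤ Real.log (p * (a - b * Real.exp (k * x)) + q * (a - b * Real.exp (k * y))) := hlog1
    _ ≤ Real.log (a - b * Real.exp (k * (p • x + q • y))) := Real.log_le_log hpos2 step1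

lemma log_add_exp_convex {a b k : ℝ} (ha : 0 ≤ a) (hb : 0 ≤ b) {S : Set ℝ} (hS : Convex ℝ S)
    (hpos : ∀ t : ℝ, 0 < a + b * Real.exp (k * t)) :
    ConvexOn ℝ S (fun t => Real.log (a + b * Real.exp (k * t))) := by
  refine ⟨hS, fun x hx y hy p q hp hq hpq => ?_⟩
  rcases hp.eq_or_lt with h | hp'
  · have hq1 : q = 1 := by linarith
    simp [← h, hq1]
  rcases hq.eq_or_lt with h | hq'
  · have hp1 : p = 1 := by linarith
    simp [← h, hp1]
  have hpow : ∀ c : ℝ, 0 ≤ c → c ^ p * c ^ q = c := fun c hc => by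
    rcases hc.eq_or_lt with h | h
    · rw [← h, Real.zero_rpow hp'.ne', zero_mul]
    · rw [← Real.rpow_add h, hpq, Real.rpow_one]
  have hexp : ∀ z w : ℝ, Real.exp z ^ w = Real.exp (z * w) := fun z w => by
    rw [Real.rpow_def_of_pos (Real.exp_pos z), Real.log_exp]
  have hFx := hpos x
  have hFy := hpos y
  have key : a + b * Real.exp (k * (p • x + q • y))
      ≤ (a + b * Real.exp (k * x)) ^ p * (a + b * Real.exp (k * y)) ^ q := by
    have h2 := hoelder2 hp' hq' hpq ha (by positivity : (0:ℝ) ≤ b * Real.exp (k * x))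
      ha (by positivity : (0:ℝ) ≤ b * Real.exp (k * y)) hFx hFy
    have e1 : (b * Real.exp (k * x)) ^ p * (b * Real.exp (k * y)) ^ q
        = b * Real.exp (k * (p • x + q • y)) := by
      rw [Real.mul_rpow hb (Real.exp_pos _).le, Real.mul_rpow hb (Real.exp_pos _).le,
        hexp, hexp]
      have : b ^ p * Real.exp (k * x * p) * (b ^ q * Real.exp (k * y * q))
          = (b ^ p * b ^ q) * (Real.exp (k * x * p) * Real.exp (k * y * q)) := by ring
      rw [this, hpow b hb, ← Real.exp_add]
      simp only [smul_eq_mul]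
      ring_nf
    rw [hpow a ha, e1] at h2
    exact h2
  have hrhs : p • Real.log (a + b * Real.exp (k * x)) + q • Real.log (a + b * Real.exp (k * y))
      = Real.log ((a + b * Real.exp (k * x)) ^ p * (a + b * Real.exp (k * y)) ^ q) := by
    rw [Real.log_mul (by positivity) (by positivity), Real.log_rpow hFx, Real.log_rpow hFy]
    simp [smul_eq_mul]
  rw [hrhs]
  exact Real.log_le_log (hpos _) key

theorem stmt_13 (α μ : ℝ) (hα : 0 < α) (hμ : 0 ≤ μ) (hcond : α ≥ μ * (2 + μ))
    (R₁ R₂ : ℝ → ℝ)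
    (hR₁ : ∀ η, R₁ η = Real.logb 2 (1 + α * η / (1 + μ * (1 - η))))
    (hR₂ : ∀ η, R₂ η = Real.logb 2 (1 + α * (1 - η) / (1 + μ * η))) :
    ∀ F : ℝ → ℝ, (∀ η ∈ Icc (0:ℝ) 1, F (R₂ η) = R₁ η) →
      ConcaveOn ℝ (Icc (0:ℝ) (Real.logb 2 (1 + α))) F := by
  intro F hF
  set T : ℝ := Real.logb 2 (1 + α) with hT
  set P : ℝ := (1 + α)^2 - (1 + μ)^2 with hPdef
  set Q : ℝ := (1 + α) - (1 + μ)^2 with hQdef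
  set Rr : ℝ := (1 + μ)^2 - 1 with hRdef
  have hQ0 : 0 ≤ Q := by simp only [hQdef]; nlinarith
  have hR0 : 0 ≤ Rr := by simp only [hRdef]; nlinarith
  have h2pos : (0:ℝ) < 2 := by norm_num
  have hexpT : Real.exp (Real.log 2 * T) = 1 + α := by
    rw [← Real.rpow_def_of_pos h2pos T, hT,
      Real.rpow_logb h2pos (by norm_num) (by linarith)]
  -- positivity on the interval in t-coordinates
  have hpos1 : ∀ t ∈ Icc (0:ℝ) T, 0 < P - Q * Real.exp (Real.log 2 * t) := by
    intro t ht
    have h1 : Real.exp (Real.log 2 * t) ≤ 1 + α := by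
      rw [← hexpT]
      exact Real.exp_le_exp.2 (mul_le_mul_of_nonneg_left ht.2 (Real.log_nonneg (by norm_num)))
    have h2 := mul_le_mul_of_nonneg_left h1 hQ0
    have hPQ : P - Q * (1 + α) = (1 + μ)^2 * α := by rw [hPdef, hQdef]; ring
    have hpos' : 0 < (1 + μ)^2 * α := mul_pos (by positivity) hα
    linarith
  have hpos2 : ∀ t : ℝ, 0 < Q + Rr * Real.exp (Real.log 2 * t) := by
    intro t
    have he := Real.exp_pos (Real.log 2 * t)
    have hsum : Q + Rr = α := by rw [hQdef, hRdef]; ring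
    rcases hQ0.eq_or_lt with h | h
    · have hRα : Rr = α := by linarith
      rw [← h, hRα]
      simpa using mul_pos hα he
    · positivity
  -- the concave model function
  set G : ℝ → ℝ := fun t => (Real.log 2)⁻¹ *
    (Real.log (P - Q * Real.exp (Real.log 2 * t)) -
      Real.log (Q + Rr * Real.exp (Real.log 2 * t))) with hGdef
  have hG : ConcaveOn ℝ (Icc (0:ℝ) T) G := by
    have h1 := log_sub_exp_concave (a := P) (b := Q) (k := Real.log 2) hQ0
      (convex_Icc _ _) hpos1
    have h2 := log_add_exp_convex (a := Q) (b := Rr) (k := Real.log 2) hQ0 hR0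
      (convex_Icc (0:ℝ) T) hpos2
    have h3 := (h1.sub h2).smul (c := (Real.log 2)⁻¹)
      (inv_nonneg.2 (Real.log_nonneg (by norm_num)))
    convert h3 using 1
    try (funext t; simp [smul_eq_mul])
    all_goals rfl
  -- F agrees with G on the interval
  have hFG : ∀ u ∈ Icc (0:ℝ) T, F u = G u := by
    intro u hu
    set s : ℝ := (2:ℝ) ^ u with hsdef
    have hexps : Real.exp (Real.log 2 * u) = s := by
      rw [hsdef, Real.rpow_def_of_pos h2pos u]
    have hs1 : 1 ≤ s := by
      rw [hsdef, show (1:ℝ) = (2:ℝ) ^ (0:ℝ) by simp]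
      exact Real.rpow_le_rpow_of_exponent_le (by norm_num) hu.1
    have hs2 : s ≤ 1 + α := by
      rw [hsdef, ← Real.rpow_logb h2pos (by norm_num) (by linarith : (0:ℝ) < 1 + α)]
      exact Real.rpow_le_rpow_of_exponent_le (by norm_num) hu.2
    set d : ℝ := α + μ * (s - 1) with hddef
    have hd : 0 < d := by simp only [hddef]; nlinarith
    set η : ℝ := (1 + α - s) / d with hηdef
    have hη0 : 0 ≤ η := div_nonneg (by linarith) hd.le
    have hη1 : η ≤ 1 := by
      rw [hηdef, div_le_one hd]
      simp only [hddef]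
      nlinarith
    -- R₂ η = u
    have h1μη : 0 < 1 + μ * η := by linarith [mul_nonneg hμ hη0]
    have hfrac : α * (1 - η) / (1 + μ * η) = s - 1 := by
      rw [div_eq_iff h1μη.ne']
      simp only [hηdef, hddef]
      have hd' : α + μ * (s - 1) ≠ 0 := hd.ne'
      field_simp
      ring
    have hR2u : R₂ η = u := by
      rw [hR₂, hfrac, show 1 + (s - 1) = s by ring, hsdef]
      exact Real.logb_rpow h2pos (by norm_num)
    -- R₁ η = G u
    have hμη1 : 0 < 1 + μ * (1 - η) := by linarith [mul_nonneg hμ (by linarith : 0 ≤ 1 - η)]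
    have hP1 : 0 < P - Q * s := by
      have h2 := mul_le_mul_of_nonneg_left hs2 hQ0
      have hPQ : P - Q * (1 + α) = (1 + μ)^2 * α := by rw [hPdef, hQdef]; ring
      have hpos' : 0 < (1 + μ)^2 * α := mul_pos (by positivity) hα
      linarith
    have hP2 : 0 < Q + Rr * s := by
      have h3 : Rr * 1 ≤ Rr * s := mul_le_mul_of_nonneg_left hs1 hR0
      have hsum2 : Q + Rr = α := by rw [hQdef, hRdef]; ring
      linarith
    have key : 1 + α * η / (1 + μ * (1 - η)) = (P - Q * s) / (Q + Rr * s) := by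
      have hstep : α * η * (Q + Rr * s) / (1 + μ * (1 - η)) = P - Q * s - (Q + Rr * s) := by
        rw [div_eq_iff hμη1.ne']
        simp only [hηdef, hddef, hPdef, hQdef, hRdef]
        have hd' : α + μ * (s - 1) ≠ 0 := hd.ne'
        field_simp
        ring
      rw [eq_div_iff hP2.ne', add_mul, one_mul, div_mul_eq_mul_div, hstep]
      ring
    have hR1η : R₁ η = G u := by
      rw [hR₁, key, Real.logb_div hP1.ne' hP2.ne', hGdef]
      simp only [hexps, Real.logb]
      ring
    conv_lhs => rw [← hR2u]
    rw [hF η ⟨hη0, hη1⟩, hR1η]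
  exact ⟨hG.1, fun x hx y hy p q hp hq hpq => by
    rw [hFG _ (hG.1 hx hy hp hq hpq), hFG _ hx, hFG _ hy]
    exact hG.2 hx hy hp hq hpq⟩
end

section
/- Let α > 0 and μ ≥ 0. If α < μ(2+μ), then there exists η ∈ (0,1) at which the parametric second derivative (R₁''R₂' − R₂''R₁')/(R₂')³ of the downlink LoS boundary curve (with R₁(η) = log₂(1 + αη/(1+μ(1−η))), R₂(η) = log₂(1+α(1−η)/(1+μη))) is strictly positive; hence the rate region is non-convex. -/
open Real Set

private lemma hasDerivAt_lin (p q x : ℝ) : HasDerivAt (fun y : ℝ => p + q*y) q x := by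
  exact (((hasDerivAt_id x).const_mul q).const_add p).congr_deriv (by ring)

private lemma hasDerivAt_lr (p q r s x : ℝ) (hp : p + q*x ≠ 0) (hr : r + s*x ≠ 0) :
    HasDerivAt (fun y => (Real.log (p+q*y) - Real.log (r+s*y))/Real.log 2)
      ((q/(p+q*x) - s/(r+s*x))/Real.log 2) x :=
  (((hasDerivAt_lin p q x).log hp).sub ((hasDerivAt_lin r s x).log hr)).div_const _

private lemma hasDerivAt_lr' (p q r s x : ℝ) (hp : p + q*x ≠ 0) (hr : r + s*x ≠ 0) :
    HasDerivAt (fun y => (q/(p+q*y) - s/(r+s*y))/Real.log 2)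
      ((s^2/(r+s*x)^2 - q^2/(p+q*x)^2)/Real.log 2) x := by
  have d1 := (hasDerivAt_const x q).div (hasDerivAt_lin p q x) hp
  have d2 := (hasDerivAt_const x s).div (hasDerivAt_lin r s x) hr
  have h := (d1.sub d2).div_const (Real.log 2)
  have heq : (s^2/(r+s*x)^2 - q^2/(p+q*x)^2)/Real.log 2
      = ((0 * (p+q*x) - q * q) / (p+q*x)^2 - (0 * (r+s*x) - s * s) / (r+s*x)^2)/Real.log 2 := by
    ring
  rw [heq]
  exact h

set_option maxHeartbeats 1000000 in
theorem stmt_14 (α μ : ℝ) (hα : 0 < α) (hμ : 0 ≤ μ) (hcond : α < μ * (2 + μ))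
    (R₁ R₂ : ℝ → ℝ)
    (hR₁ : ∀ η, R₁ η = Real.logb 2 (1 + α * η / (1 + μ * (1 - η))))
    (hR₂ : ∀ η, R₂ η = Real.logb 2 (1 + α * (1 - η) / (1 + μ * η))) :
    ∃ η ∈ Ioo (0:ℝ) 1,
      0 < (deriv (deriv R₁) η * deriv R₂ η - deriv (deriv R₂) η * deriv R₁ η)
            / (deriv R₂ η) ^ 3 := by
  have hL : (0:ℝ) < Real.log 2 := Real.log_pos one_lt_two
  have hμ' : 0 < μ := by nlinarith
  have hhalf : (1/2 : ℝ) ∈ Ioo (0:ℝ) 1 := by norm_num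
  refine ⟨1/2, hhalf, ?_⟩
  have hP1 : ∀ η ∈ Ioo (0:ℝ) 1, 0 < (1+μ) + (α-μ)*η := by
    rintro η ⟨h0, h1⟩
    rcases le_total μ α with h | h
    · nlinarith
    · nlinarith
  have hP2 : ∀ η ∈ Ioo (0:ℝ) 1, 0 < (1+μ) + (-μ)*η := by
    rintro η ⟨h0, h1⟩; nlinarith
  have hP3 : ∀ η ∈ Ioo (0:ℝ) 1, 0 < (1+α) + (μ-α)*η := by
    rintro η ⟨h0, h1⟩
    rcases le_total μ α with h | h
    · nlinarith
    · nlinarith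
  have hP4 : ∀ η ∈ Ioo (0:ℝ) 1, 0 < (1:ℝ) + μ*η := by
    rintro η ⟨h0, h1⟩; nlinarith
  have hmem : Ioo (0:ℝ) 1 ∈ nhds (1/2 : ℝ) := Ioo_mem_nhds (by norm_num) (by norm_num)
  -- R₁ equals a log-difference form on Ioo 0 1
  have he1 : Set.EqOn R₁
      (fun η => (Real.log ((1+μ) + (α-μ)*η) - Real.log ((1+μ) + (-μ)*η))/Real.log 2)
      (Ioo (0:ℝ) 1) := by
    intro η hη
    have h1 := hP1 η hη
    have h2 := hP2 η hη
    have harg : 1 + α*η/(1+μ*(1-η)) = ((1+μ)+(α-μ)*η)/((1+μ)+(-μ)*η) := by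
      rw [show (1:ℝ)+μ*(1-η) = (1+μ)+(-μ)*η by ring, eq_div_iff h2.ne', add_mul,
        div_mul_cancel₀ _ h2.ne']
      ring
    rw [hR₁ η, harg, Real.logb, Real.log_div h1.ne' h2.ne']
  have he2 : Set.EqOn R₂
      (fun η => (Real.log ((1+α) + (μ-α)*η) - Real.log ((1:ℝ) + μ*η))/Real.log 2)
      (Ioo (0:ℝ) 1) := by
    intro η hη
    have h1 := hP3 η hη
    have h2 := hP4 η hη
    have harg : 1 + α*(1-η)/(1+μ*η) = ((1+α)+(μ-α)*η)/((1:ℝ)+μ*η) := by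
      rw [eq_div_iff h2.ne', add_mul, div_mul_cancel₀ _ h2.ne']
      ring
    rw [hR₂ η, harg, Real.logb, Real.log_div h1.ne' h2.ne']
  -- first derivatives
  have hd1 : ∀ η ∈ Ioo (0:ℝ) 1, HasDerivAt R₁
      (((α-μ)/((1+μ)+(α-μ)*η) - (-μ)/((1+μ)+(-μ)*η))/Real.log 2) η := by
    intro η hη
    exact (hasDerivAt_lr (1+μ) (α-μ) (1+μ) (-μ) η (hP1 η hη).ne' (hP2 η hη).ne').congr_of_eventuallyEq
      (Filter.eventuallyEq_of_mem (Ioo_mem_nhds hη.1 hη.2) he1)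
  have hd2 : ∀ η ∈ Ioo (0:ℝ) 1, HasDerivAt R₂
      (((μ-α)/((1+α)+(μ-α)*η) - μ/((1:ℝ)+μ*η))/Real.log 2) η := by
    intro η hη
    exact (hasDerivAt_lr (1+α) (μ-α) 1 μ η (hP3 η hη).ne' (hP4 η hη).ne').congr_of_eventuallyEq
      (Filter.eventuallyEq_of_mem (Ioo_mem_nhds hη.1 hη.2) he2)
  -- second derivatives at 1/2
  have hdd1 : deriv (deriv R₁) (1/2)
      = ((-μ)^2/((1+μ)+(-μ)*(1/2:ℝ))^2 - (α-μ)^2/((1+μ)+(α-μ)*(1/2:ℝ))^2)/Real.log 2 := by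
    have hEq : deriv R₁ =ᶠ[nhds (1/2:ℝ)]
        (fun η => ((α-μ)/((1+μ)+(α-μ)*η) - (-μ)/((1+μ)+(-μ)*η))/Real.log 2) :=
      Filter.eventuallyEq_of_mem hmem (fun η hη => (hd1 η hη).deriv)
    rw [hEq.deriv_eq]
    exact (hasDerivAt_lr' (1+μ) (α-μ) (1+μ) (-μ) (1/2) (hP1 _ hhalf).ne' (hP2 _ hhalf).ne').deriv
  have hdd2 : deriv (deriv R₂) (1/2)
      = (μ^2/((1:ℝ)+μ*(1/2:ℝ))^2 - (μ-α)^2/((1+α)+(μ-α)*(1/2:ℝ))^2)/Real.log 2 := by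
    have hEq : deriv R₂ =ᶠ[nhds (1/2:ℝ)]
        (fun η => ((μ-α)/((1+α)+(μ-α)*η) - μ/((1:ℝ)+μ*η))/Real.log 2) :=
      Filter.eventuallyEq_of_mem hmem (fun η hη => (hd2 η hη).deriv)
    rw [hEq.deriv_eq]
    exact (hasDerivAt_lr' (1+α) (μ-α) 1 μ (1/2) (hP3 _ hhalf).ne' (hP4 _ hhalf).ne').deriv
  have e1 : deriv R₁ (1/2)
      = ((α-μ)/((1+μ)+(α-μ)*(1/2:ℝ)) - (-μ)/((1+μ)+(-μ)*(1/2:ℝ)))/Real.log 2 :=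
    (hd1 _ hhalf).deriv
  have e2 : deriv R₂ (1/2)
      = ((μ-α)/((1+α)+(μ-α)*(1/2:ℝ)) - μ/((1:ℝ)+μ*(1/2:ℝ)))/Real.log 2 :=
    (hd2 _ hhalf).deriv
  rw [hdd1, hdd2, e1, e2]
  have hA := hP1 _ hhalf
  have hB := hP2 _ hhalf
  have hA2 := hP3 _ hhalf
  have hB2 := hP4 _ hhalf
  have hG1 : 0 < ((α-μ)/((1+μ)+(α-μ)*(1/2:ℝ)) - (-μ)/((1+μ)+(-μ)*(1/2:ℝ)))/Real.log 2 := by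
    apply div_pos _ hL
    rw [div_sub_div _ _ hA.ne' hB.ne']
    apply div_pos _ (mul_pos hA hB)
    nlinarith [mul_pos hα (show (0:ℝ) < 1+μ by linarith)]
  have hG2 : ((μ-α)/((1+α)+(μ-α)*(1/2:ℝ)) - μ/((1:ℝ)+μ*(1/2:ℝ)))/Real.log 2 < 0 := by
    apply div_neg_of_neg_of_pos _ hL
    rw [div_sub_div _ _ hA2.ne' hB2.ne']
    apply div_neg_of_neg_of_pos _ (mul_pos hA2 hB2)
    nlinarith [mul_pos hα (show (0:ℝ) < 1+μ by linarith)]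
  have hV1 : 0 < ((-μ)^2/((1+μ)+(-μ)*(1/2:ℝ))^2 - (α-μ)^2/((1+μ)+(α-μ)*(1/2:ℝ))^2)/Real.log 2 := by
    apply div_pos _ hL
    rw [div_sub_div _ _ (pow_pos hB 2).ne' (pow_pos hA 2).ne']
    apply div_pos _ (mul_pos (pow_pos hB 2) (pow_pos hA 2))
    nlinarith [mul_pos (show (0:ℝ) < μ*(2+μ) - α by linarith)
      (mul_pos hα (show (0:ℝ) < 1+μ by linarith))]
  have hV2 : 0 < (μ^2/((1:ℝ)+μ*(1/2:ℝ))^2 - (μ-α)^2/((1+α)+(μ-α)*(1/2:ℝ))^2)/Real.log 2 := by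
    apply div_pos _ hL
    rw [div_sub_div _ _ (pow_pos hB2 2).ne' (pow_pos hA2 2).ne']
    apply div_pos _ (mul_pos (pow_pos hB2 2) (pow_pos hA2 2))
    nlinarith [mul_pos (show (0:ℝ) < μ*(2+μ) - α by linarith)
      (mul_pos hα (show (0:ℝ) < 1+μ by linarith))]
  set G1 := ((α-μ)/((1+μ)+(α-μ)*(1/2:ℝ)) - (-μ)/((1+μ)+(-μ)*(1/2:ℝ)))/Real.log 2
  set G2 := ((μ-α)/((1+α)+(μ-α)*(1/2:ℝ)) - μ/((1:ℝ)+μ*(1/2:ℝ)))/Real.log 2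
  set V1 := ((-μ)^2/((1+μ)+(-μ)*(1/2:ℝ))^2 - (α-μ)^2/((1+μ)+(α-μ)*(1/2:ℝ))^2)/Real.log 2
  set V2 := (μ^2/((1:ℝ)+μ*(1/2:ℝ))^2 - (μ-α)^2/((1+α)+(μ-α)*(1/2:ℝ))^2)/Real.log 2
  have hnum : V1 * G2 - V2 * G1 < 0 := by
    nlinarith [mul_pos hV2 hG1, mul_neg_of_pos_of_neg hV1 hG2]
  have hden : G2 ^ 3 < 0 := by
    have h3 : G2 ^ 3 = G2 * (G2 * G2) := by ring
    rw [h3]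
    exact mul_neg_of_neg_of_pos hG2 (mul_pos_of_neg_of_neg hG2 hG2)
  exact div_pos_of_neg_of_neg hnum hden
end
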